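/- The set P_I(C_2) is given as follows: if C_1 < C_2, then P_I(C_2) = [Q_1, 1]; if C_1 = C_2, then P_I(C_2) = [Q_1, 1] when ρ_{11} < |ρ_{12}| ≤ ρ_{22}, P_I(C_2) = [Q_2, 1] when ρ_{22} < |ρ_{12}| ≤ ρ_{11}, and P_I(C_2) = [2|ρ_{12}|, 1] when |ρ_{12}| ≤ ρ_{11} and |ρ_{12}| ≤ ρ_{22}. -/

import Mathlib

open Matrix ComplexOrder

noncomputable section

namespace FRIR

/-- A three-outcome POVM on a qubit: `M₀` is the inconclusive outcome. -/
def IsPOVM (M₀ M₁ M₂ : Matrix (Fin 2) (Fin 2) ℂ) : Prop :=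
  M₀.PosSemidef ∧ M₁.PosSemidef ∧ M₂.PosSemidef ∧ M₀ + M₁ + M₂ = 1

/-- `ρ₀ = q₁ρ₁ + q₂ρ₂`. -/
def rho0 (q₁ q₂ : ℝ) (ρ₁ ρ₂ : Matrix (Fin 2) (Fin 2) ℂ) : Matrix (Fin 2) (Fin 2) ℂ :=
  (q₁ : ℂ) • ρ₁ + (q₂ : ℂ) • ρ₂

/-- The probability of the inconclusive result, `P_I = tr(ρ₀M₀)`. -/
def PIof (q₁ q₂ : ℝ) (ρ₁ ρ₂ M₀ : Matrix (Fin 2) (Fin 2) ℂ) : ℝ :=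
  (Matrix.trace (rho0 q₁ q₂ ρ₁ ρ₂ * M₀)).re

/-- `P_cor = q₁tr(ρ₁M₁) + q₂tr(ρ₂M₂)`. -/
def Pcor (q₁ q₂ : ℝ) (ρ₁ ρ₂ M₁ M₂ : Matrix (Fin 2) (Fin 2) ℂ) : ℝ :=
  q₁ * (Matrix.trace (ρ₁ * M₁)).re + q₂ * (Matrix.trace (ρ₂ * M₂)).re

/-- `P̄_cor = q·tr(ρ₀M₀) + q₁tr(ρ₁M₁) + q₂tr(ρ₂M₂)`. -/
def PbarCor (q q₁ q₂ : ℝ) (ρ₁ ρ₂ M₀ M₁ M₂ : Matrix (Fin 2) (Fin 2) ℂ) : ℝ :=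
  q * PIof q₁ q₂ ρ₁ ρ₂ M₀ + Pcor q₁ q₂ ρ₁ ρ₂ M₁ M₂

/-- `P̄_cor^opt(q)`: the maximal value of `P̄_cor` over all POVMs. -/
def PbarOpt (q q₁ q₂ : ℝ) (ρ₁ ρ₂ : Matrix (Fin 2) (Fin 2) ℂ) : ℝ :=
  sSup {x : ℝ | ∃ M₀ M₁ M₂, IsPOVM M₀ M₁ M₂ ∧ PbarCor q q₁ q₂ ρ₁ ρ₂ M₀ M₁ M₂ = x}

/-- `P_cor^opt(Q)`: the maximal value of `P_cor` over POVMs with `P_I = Q`. -/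
def PcorOpt (Q q₁ q₂ : ℝ) (ρ₁ ρ₂ : Matrix (Fin 2) (Fin 2) ℂ) : ℝ :=
  sSup {x : ℝ | ∃ M₀ M₁ M₂, IsPOVM M₀ M₁ M₂ ∧
    PIof q₁ q₂ ρ₁ ρ₂ M₀ = Q ∧ Pcor q₁ q₂ ρ₁ ρ₂ M₁ M₂ = x}

/-- `P_I(q) = { tr(ρ₀M₀) : POVMs attaining P̄_cor^opt(q) }`. -/
def PIset (q q₁ q₂ : ℝ) (ρ₁ ρ₂ : Matrix (Fin 2) (Fin 2) ℂ) : Set ℝ :=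
  {Q : ℝ | ∃ M₀ M₁ M₂, IsPOVM M₀ M₁ M₂ ∧
    PbarCor q q₁ q₂ ρ₁ ρ₂ M₀ M₁ M₂ = PbarOpt q q₁ q₂ ρ₁ ρ₂ ∧ PIof q₁ q₂ ρ₁ ρ₂ M₀ = Q}

/-- `q₀⁽⁰⁾ = sup{q > 0 : 0 ∈ P_I(q)}`. -/
def q0low (q₁ q₂ : ℝ) (ρ₁ ρ₂ : Matrix (Fin 2) (Fin 2) ℂ) : ℝ :=
  sSup {q : ℝ | 0 < q ∧ (0 : ℝ) ∈ PIset q q₁ q₂ ρ₁ ρ₂}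

/-- `q₀⁽¹⁾ = inf{q > 0 : 1 ∈ P_I(q)}`. -/
def q0high (q₁ q₂ : ℝ) (ρ₁ ρ₂ : Matrix (Fin 2) (Fin 2) ℂ) : ℝ :=
  sInf {q : ℝ | 0 < q ∧ (1 : ℝ) ∈ PIset q q₁ q₂ ρ₁ ρ₂}

local notation "M2" => Matrix (Fin 2) (Fin 2) ℂ

lemma vecMulVec_mulVec' (u v x : Fin 2 → ℂ) : vecMulVec u v *ᵥ x = (v ⬝ᵥ x) • u := by
  funext i
  simp only [Matrix.mulVec, Matrix.vecMulVec_apply, dotProduct, Pi.smul_apply, smul_eq_mul,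
    Finset.sum_mul]
  exact Finset.sum_congr rfl fun j _ => by ring

lemma trace_vecMulVec_mul (u w : Fin 2 → ℂ) (A : M2) :
    Matrix.trace (vecMulVec u w * A) = w ⬝ᵥ (A *ᵥ u) := by
  simp only [Matrix.trace, Matrix.diag, Matrix.mul_apply, Matrix.vecMulVec_apply, dotProduct,
    Matrix.mulVec, Finset.mul_sum]
  rw [Finset.sum_comm]
  exact Finset.sum_congr rfl fun k _ => Finset.sum_congr rfl fun i _ => by ring

lemma trace_mul_vecMulVec (u w : Fin 2 → ℂ) (A : M2) :
    Matrix.trace (A * vecMulVec u w) = w ⬝ᵥ (A *ᵥ u) := by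
  rw [Matrix.trace_mul_comm, trace_vecMulVec_mul]

lemma star_dot_comm (u v : Fin 2 → ℂ) : star u ⬝ᵥ v = (starRingEnd ℂ) (star v ⬝ᵥ u) := by
  rw [dotProduct, dotProduct, map_sum]
  exact Finset.sum_congr rfl fun j _ => by
    simp only [Pi.star_apply, Complex.star_def, _root_.map_mul, Complex.conj_conj]
    ring

lemma herm_dot {A : M2} (hA : A.IsHermitian) (x y : Fin 2 → ℂ) :
    star y ⬝ᵥ A *ᵥ x = (starRingEnd ℂ) (star x ⬝ᵥ A *ᵥ y) := by
  have h1 : star (A *ᵥ y) = star y ᵥ* A := by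
    rw [Matrix.star_mulVec, hA.eq]
  calc star y ⬝ᵥ A *ᵥ x = (star y ᵥ* A) ⬝ᵥ x := by rw [Matrix.dotProduct_mulVec]
    _ = star (A *ᵥ y) ⬝ᵥ x := by rw [h1]
    _ = (starRingEnd ℂ) (star x ⬝ᵥ (A *ᵥ y)) := by rw [← star_dot_comm]

lemma resolution {ν₁ ν₂ : Fin 2 → ℂ}
    (hν₁ : star ν₁ ⬝ᵥ ν₁ = 1) (hν₂ : star ν₂ ⬝ᵥ ν₂ = 1) (hν₁₂ : star ν₁ ⬝ᵥ ν₂ = 0) :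
    vecMulVec ν₁ (star ν₁) + vecMulVec ν₂ (star ν₂) = 1 := by
  have hν₂₁ : star ν₂ ⬝ᵥ ν₁ = 0 := by
    rw [star_dot_comm, hν₁₂, map_zero]
  simp only [dotProduct, Fin.sum_univ_two, Pi.star_apply, Complex.star_def]
    at hν₁ hν₂ hν₁₂ hν₂₁
  set V : M2 := Matrix.of ![star ν₁, star ν₂] with hV
  have hVV : V * Vᴴ = 1 := by
    ext i j
    fin_cases i <;> fin_cases j <;>
      simp only [V, Matrix.mul_apply, Matrix.conjTranspose_apply, Matrix.of_apply,
        Matrix.cons_val', Matrix.cons_val_zero, Matrix.cons_val_one, Matrix.head_cons,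
        Matrix.empty_val', Matrix.cons_val_fin_one, Fin.sum_univ_two, Pi.star_apply,
        Complex.star_def, Complex.conj_conj, Fin.isValue, Fin.mk_one, Fin.zero_eta,
        Matrix.one_apply, if_true, if_false, Fin.ext_iff, Fin.val_zero, Fin.val_one,
        zero_ne_one, one_ne_zero, ite_true, ite_false, reduceIte, Matrix.vecHead, Matrix.vecTail]
    · linear_combination hν₁
    · linear_combination hν₁₂
    · linear_combination hν₂₁
    · linear_combination hν₂
  have hVV' : Vᴴ * V = 1 := mul_eq_one_comm.mp hVV
  calc vecMulVec ν₁ (star ν₁) + vecMulVec ν₂ (star ν₂) = Vᴴ * V := by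
        ext i j
        simp only [V, Matrix.add_apply, Matrix.vecMulVec_apply, Pi.star_apply, Complex.star_def,
          Matrix.mul_apply, Matrix.conjTranspose_apply, Matrix.of_apply, Matrix.cons_val',
          Matrix.cons_val_zero, Matrix.cons_val_one, Matrix.head_cons, Matrix.empty_val',
          Matrix.cons_val_fin_one, Fin.sum_univ_two, Complex.conj_conj, Matrix.vecHead, Matrix.vecTail]
    _ = 1 := hVV'

lemma quad_expand (ν₁ ν₂ : Fin 2 → ℂ) (A : Matrix (Fin 2) (Fin 2) ℂ) (β γ : ℂ) :
    star (β • ν₁ + γ • ν₂) ⬝ᵥ A *ᵥ (β • ν₁ + γ • ν₂)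
      = (starRingEnd ℂ) β * β * (star ν₁ ⬝ᵥ A *ᵥ ν₁)
      + (starRingEnd ℂ) β * γ * (star ν₁ ⬝ᵥ A *ᵥ ν₂)
      + (starRingEnd ℂ) γ * β * (star ν₂ ⬝ᵥ A *ᵥ ν₁)
      + (starRingEnd ℂ) γ * γ * (star ν₂ ⬝ᵥ A *ᵥ ν₂) := by
  simp only [star_add, star_smul, Matrix.mulVec_add, Matrix.mulVec_smul, dotProduct_add,
    add_dotProduct, smul_dotProduct, dotProduct_smul, smul_eq_mul, Complex.star_def]
  ring

lemma decomp {ν₁ ν₂ : Fin 2 → ℂ}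
    (hres : vecMulVec ν₁ (star ν₁) + vecMulVec ν₂ (star ν₂) = 1)
    (x : Fin 2 → ℂ) : x = (star ν₁ ⬝ᵥ x) • ν₁ + (star ν₂ ⬝ᵥ x) • ν₂ := by
  have h := congrArg (fun M => M *ᵥ x) hres
  simp only [Matrix.add_mulVec, vecMulVec_mulVec', Matrix.one_mulVec] at h
  exact h.symm

lemma posSemidef_of_form {ν₁ ν₂ : Fin 2 → ℂ}
    (hres : vecMulVec ν₁ (star ν₁) + vecMulVec ν₂ (star ν₂) = 1)
    {K : Matrix (Fin 2) (Fin 2) ℂ} (hK : K.IsHermitian) {a b : ℝ} {c : ℂ}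
    (h1 : star ν₁ ⬝ᵥ K *ᵥ ν₁ = (a : ℂ)) (h2 : star ν₂ ⬝ᵥ K *ᵥ ν₂ = (b : ℂ))
    (h3 : star ν₁ ⬝ᵥ K *ᵥ ν₂ = c)
    (ha : 0 ≤ a) (hb : 0 ≤ b) (hab : ‖c‖ ^ 2 ≤ a * b) : K.PosSemidef := by
  have h4 : star ν₂ ⬝ᵥ K *ᵥ ν₁ = (starRingEnd ℂ) c := by rw [herm_dot hK, h3]
  refine Matrix.PosSemidef.of_dotProduct_mulVec_nonneg hK fun x => ?_
  obtain ⟨β, γ, hx⟩ : ∃ β γ, x = β • ν₁ + γ • ν₂ := ⟨_, _, decomp hres x⟩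
  rw [hx, quad_expand, h1, h2, h3, h4]
  set z := (starRingEnd ℂ) β * γ * c with hz
  have hcc : (starRingEnd ℂ) β * β = ((Complex.normSq β : ℝ) : ℂ) := by
    rw [mul_comm]; exact Complex.mul_conj β
  have hgg : (starRingEnd ℂ) γ * γ = ((Complex.normSq γ : ℝ) : ℂ) := by
    rw [mul_comm]; exact Complex.mul_conj γ
  have hzz : (starRingEnd ℂ) γ * β * (starRingEnd ℂ) c - (starRingEnd ℂ) z = 0 := by
    simp only [hz, _root_.map_mul, Complex.conj_conj]; ring
  have h2re : ((z.re : ℝ) : ℂ) = (z + (starRingEnd ℂ) z) / 2 := by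
    rw [Complex.add_conj]; push_cast; ring
  have e : (starRingEnd ℂ) β * β * (a:ℂ) + (starRingEnd ℂ) β * γ * (c:ℂ)
      + (starRingEnd ℂ) γ * β * (starRingEnd ℂ) c + (starRingEnd ℂ) γ * γ * (b:ℂ)
      = ((Complex.normSq β * a + Complex.normSq γ * b + 2 * z.re : ℝ) : ℂ) := by
    push_cast
    linear_combination (a:ℂ) * hcc + (b:ℂ) * hgg + hzz - 2 * h2re
  rw [e, Complex.zero_le_real]
  have habsz : ‖z‖ = ‖β‖ * ‖γ‖ * ‖c‖ := by
    simp [hz, _root_.map_mul, Complex.norm_conj]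
  have hzre2 : -(‖β‖ * ‖γ‖ * ‖c‖) ≤ z.re := by
    rw [← habsz]; exact (abs_le.1 (Complex.abs_re_le_norm z)).1
  have key : 2 * (‖β‖ * ‖γ‖ * ‖c‖)
      ≤ a * ‖β‖ ^ 2 + b * ‖γ‖ ^ 2 := by
    rcases ha.eq_or_lt with h | h
    · have hc : ‖c‖ = 0 := by
        have h0 : ‖c‖ ^ 2 ≤ 0 := by rw [← h] at hab; linarith [hab]
        nlinarith [norm_nonneg c]
      rw [hc, ← h]
      have := norm_nonneg γ
      nlinarith [norm_nonneg β]
    · nlinarith [sq_nonneg (a * ‖β‖ - ‖c‖ * ‖γ‖),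
        mul_nonneg (sub_nonneg.2 hab) (sq_nonneg (‖γ‖)),
        norm_nonneg β, norm_nonneg γ, norm_nonneg c]
  have hb2 : Complex.normSq β = ‖β‖ ^ 2 := (Complex.sq_norm β).symm
  have hg2 : Complex.normSq γ = ‖γ‖ ^ 2 := (Complex.sq_norm γ).symm
  rw [hb2, hg2]
  linarith

lemma form_facts {ν₁ ν₂ : Fin 2 → ℂ}
    {K : Matrix (Fin 2) (Fin 2) ℂ} (hK : K.PosSemidef) {a b : ℝ} {c : ℂ}
    (h1 : star ν₁ ⬝ᵥ K *ᵥ ν₁ = (a : ℂ)) (h2 : star ν₂ ⬝ᵥ K *ᵥ ν₂ = (b : ℂ))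
    (h3 : star ν₁ ⬝ᵥ K *ᵥ ν₂ = c) :
    0 ≤ a ∧ 0 ≤ b ∧ ‖c‖ ^ 2 ≤ a * b := by
  have h4 : star ν₂ ⬝ᵥ K *ᵥ ν₁ = (starRingEnd ℂ) c := by rw [herm_dot hK.1, h3]
  have ha : 0 ≤ a := by
    have h := hK.dotProduct_mulVec_nonneg ν₁; rw [h1] at h; exact Complex.zero_le_real.mp h
  have hb : 0 ≤ b := by
    have h := hK.dotProduct_mulVec_nonneg ν₂; rw [h2] at h; exact Complex.zero_le_real.mp h
  have hcc : (starRingEnd ℂ) c * c = ((Complex.normSq c : ℝ) : ℂ) := by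
    rw [mul_comm]; exact Complex.mul_conj c
  have ht : ∀ t : ℝ, 0 ≤ a * t^2 * Complex.normSq c - 2 * t * Complex.normSq c + b := by
    intro t
    have h := hK.dotProduct_mulVec_nonneg ((-(t:ℂ) * c) • ν₁ + (1:ℂ) • ν₂)
    rw [quad_expand, h1, h2, h3, h4] at h
    have e : (starRingEnd ℂ) (-(t:ℂ) * c) * (-(t:ℂ) * c) * (a:ℂ)
        + (starRingEnd ℂ) (-(t:ℂ) * c) * (1:ℂ) * c
        + (starRingEnd ℂ) (1:ℂ) * (-(t:ℂ) * c) * (starRingEnd ℂ) c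
        + (starRingEnd ℂ) (1:ℂ) * (1:ℂ) * (b:ℂ)
        = ((a * t^2 * Complex.normSq c - 2 * t * Complex.normSq c + b : ℝ) : ℂ) := by
      have hmul : c * (starRingEnd ℂ) c = ((Complex.normSq c : ℝ) : ℂ) := Complex.mul_conj c
      simp only [_root_.map_mul, map_neg, Complex.conj_ofReal, _root_.map_one]
      push_cast
      linear_combination ((a:ℂ) * (t:ℂ)^2 - (t:ℂ)) * hcc - (t:ℂ) * hmul
    rw [e] at h
    exact Complex.zero_le_real.mp h
  refine ⟨ha, hb, ?_⟩
  rw [Complex.sq_norm]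
  by_cases hn : Complex.normSq c = 0
  · rw [hn]; exact mul_nonneg ha hb
  · have hn' : 0 < Complex.normSq c := (Complex.normSq_nonneg c).lt_of_ne (Ne.symm hn)
    have hapos : 0 < a := by
      rcases ha.eq_or_lt with h | h
      · exfalso
        have h2 := ht ((b+1)/(2*Complex.normSq c))
        rw [← h] at h2
        have e2 : 2 * ((b+1)/(2*Complex.normSq c)) * Complex.normSq c = b + 1 := by
          field_simp
        nlinarith [h2]
      · exact h
    have h2 := ht (1/a)
    have e2 : a * (1/a)^2 * Complex.normSq c - 2 * (1/a) * Complex.normSq c + b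
        = b - Complex.normSq c / a := by
      field_simp; ring
    rw [e2] at h2
    have : Complex.normSq c / a ≤ b := by linarith
    calc Complex.normSq c = (Complex.normSq c / a) * a := by field_simp
      _ ≤ b * a := mul_le_mul_of_nonneg_right this ha
      _ = a * b := mul_comm _ _

local notation "M2x" => Matrix (Fin 2) (Fin 2) ℂ

lemma creal {z : ℂ} (hz : 0 ≤ z) : z = ((z.re : ℝ) : ℂ) := by
  obtain ⟨h1, h2⟩ := Complex.nonneg_iff.mp hz
  exact Complex.ext rfl (by simp [← h2])

lemma vecMulVec_posSemidef (v : Fin 2 → ℂ) : (vecMulVec v (star v)).PosSemidef := by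
  refine Matrix.PosSemidef.of_dotProduct_mulVec_nonneg ?_ ?_
  · ext i j
    simp [Matrix.conjTranspose_apply, Matrix.vecMulVec_apply, mul_comm]
  · intro x
    rw [vecMulVec_mulVec', dotProduct_smul, smul_eq_mul, star_dot_comm v x, mul_comm,
      Complex.mul_conj]
    exact Complex.zero_le_real.mpr (Complex.normSq_nonneg _)

lemma smul_herm (t : ℝ) {A : M2x} (hA : A.IsHermitian) : ((t:ℂ) • A).IsHermitian := by
  unfold Matrix.IsHermitian
  rw [Matrix.conjTranspose_smul, Complex.star_def, Complex.conj_ofReal, hA.eq]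

lemma smul_posSemidef {t : ℝ} (ht : 0 ≤ t) {A : M2x} (hA : A.PosSemidef) :
    ((t:ℂ) • A).PosSemidef := by
  refine Matrix.PosSemidef.of_dotProduct_mulVec_nonneg (smul_herm t hA.1) fun x => ?_
  rw [smul_mulVec, dotProduct_smul, smul_eq_mul]
  have h := hA.dotProduct_mulVec_nonneg x
  rw [creal h]
  rw [show ((t:ℂ) * ((star x ⬝ᵥ A *ᵥ x).re : ℝ)) = ((t * (star x ⬝ᵥ A *ᵥ x).re : ℝ) : ℂ) by
    push_cast; ring]
  exact Complex.zero_le_real.mpr (mul_nonneg ht (Complex.zero_le_real.mp (creal h ▸ h)))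

lemma pbar_identity (q₁ q₂ : ℝ) (ρ₁ ρ₂ : M2x)
    (htr₁ : ρ₁.trace = 1) (htr₂ : ρ₂.trace = 1) (hq : q₁ + q₂ = 1)
    (S : M2x) (hSS : S * S = rho0 q₁ q₂ ρ₁ ρ₂)
    (ν₁ ν₂ : Fin 2 → ℂ)
    (hres : vecMulVec ν₁ (star ν₁) + vecMulVec ν₂ (star ν₂) = 1)
    (C₁ C₂ : ℝ)
    (hbar₁ : S * ((C₁ : ℂ) • vecMulVec ν₁ (star ν₁)
        + ((1 - C₂ : ℝ) : ℂ) • vecMulVec ν₂ (star ν₂)) * S = (q₁ : ℂ) • ρ₁)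
    (hbar₂ : S * (((1 - C₁ : ℝ) : ℂ) • vecMulVec ν₁ (star ν₁)
        + (C₂ : ℂ) • vecMulVec ν₂ (star ν₂)) * S = (q₂ : ℂ) • ρ₂)
    (M₀ M₁ M₂ : M2x) (hsum : M₀ + M₁ + M₂ = 1) :
    PbarCor C₂ q₁ q₂ ρ₁ ρ₂ M₀ M₁ M₂ =
      C₂ - ((C₂ - C₁) * (star ν₁ ⬝ᵥ (S*M₁*S) *ᵥ ν₁).re
        + (2*C₂ - 1) * (star ν₂ ⬝ᵥ (S*M₁*S) *ᵥ ν₂).re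
        + (C₁ + C₂ - 1) * (star ν₁ ⬝ᵥ (S*M₂*S) *ᵥ ν₁).re) := by
  have hM₀ : M₀ = 1 - M₁ - M₂ := by rw [← hsum]; abel
  have htr0 : Matrix.trace (rho0 q₁ q₂ ρ₁ ρ₂) = 1 := by
    simp only [rho0, Matrix.trace_add, Matrix.trace_smul, htr₁, htr₂, smul_eq_mul, mul_one]
    rw [← Complex.ofReal_add, hq, Complex.ofReal_one]
  have tbasis : ∀ A : M2x, Matrix.trace A = star ν₁ ⬝ᵥ A *ᵥ ν₁ + star ν₂ ⬝ᵥ A *ᵥ ν₂ := by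
    intro A
    conv_lhs => rw [← Matrix.mul_one A, ← hres]
    rw [Matrix.mul_add, Matrix.trace_add, trace_mul_vecMulVec, trace_mul_vecMulVec]
  have cyc : ∀ B M : M2x, Matrix.trace ((S*B*S)*M) = Matrix.trace (B*(S*M*S)) := by
    intro B M
    calc Matrix.trace (S*B*S*M) = Matrix.trace (S*(B*(S*M))) := by
          simp only [Matrix.mul_assoc]
      _ = Matrix.trace ((B*(S*M))*S) := Matrix.trace_mul_comm _ _
      _ = Matrix.trace (B*(S*M*S)) := by simp only [Matrix.mul_assoc]
  have t0 : ∀ M : M2x, Matrix.trace (rho0 q₁ q₂ ρ₁ ρ₂ * M) = Matrix.trace (S*M*S) := by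
    intro M
    rw [← hSS]
    calc Matrix.trace (S*S*M) = Matrix.trace (S*(S*M)) := by rw [Matrix.mul_assoc]
      _ = Matrix.trace ((S*M)*S) := Matrix.trace_mul_comm _ _
  have c1 : (q₁:ℂ) * Matrix.trace (ρ₁ * M₁)
      = (C₁:ℂ) * (star ν₁ ⬝ᵥ (S*M₁*S) *ᵥ ν₁) + ((1 - C₂ : ℝ):ℂ) * (star ν₂ ⬝ᵥ (S*M₁*S) *ᵥ ν₂) := by
    rw [show (q₁:ℂ) * Matrix.trace (ρ₁ * M₁) = Matrix.trace (((q₁:ℂ) • ρ₁) * M₁) by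
      rw [Matrix.smul_mul, Matrix.trace_smul, smul_eq_mul]]
    rw [← hbar₁, cyc, Matrix.add_mul, Matrix.smul_mul, Matrix.smul_mul, Matrix.trace_add,
      Matrix.trace_smul, Matrix.trace_smul, trace_vecMulVec_mul, trace_vecMulVec_mul,
      smul_eq_mul, smul_eq_mul]
  have c2 : (q₂:ℂ) * Matrix.trace (ρ₂ * M₂)
      = ((1 - C₁ : ℝ):ℂ) * (star ν₁ ⬝ᵥ (S*M₂*S) *ᵥ ν₁) + (C₂:ℂ) * (star ν₂ ⬝ᵥ (S*M₂*S) *ᵥ ν₂) := by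
    rw [show (q₂:ℂ) * Matrix.trace (ρ₂ * M₂) = Matrix.trace (((q₂:ℂ) • ρ₂) * M₂) by
      rw [Matrix.smul_mul, Matrix.trace_smul, smul_eq_mul]]
    rw [← hbar₂, cyc, Matrix.add_mul, Matrix.smul_mul, Matrix.smul_mul, Matrix.trace_add,
      Matrix.trace_smul, Matrix.trace_smul, trace_vecMulVec_mul, trace_vecMulVec_mul,
      smul_eq_mul, smul_eq_mul]
  have c0 : Matrix.trace (rho0 q₁ q₂ ρ₁ ρ₂ * M₀)
      = 1 - Matrix.trace (S*M₁*S) - Matrix.trace (S*M₂*S) := by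
    rw [hM₀, Matrix.mul_sub, Matrix.mul_sub, Matrix.mul_one, Matrix.trace_sub, Matrix.trace_sub,
      htr0, t0 M₁, t0 M₂]
  have hre1 : q₁ * (Matrix.trace (ρ₁ * M₁)).re = ((q₁:ℂ) * Matrix.trace (ρ₁ * M₁)).re :=
    (Complex.re_ofReal_mul q₁ _).symm
  have hre2 : q₂ * (Matrix.trace (ρ₂ * M₂)).re = ((q₂:ℂ) * Matrix.trace (ρ₂ * M₂)).re :=
    (Complex.re_ofReal_mul q₂ _).symm
  unfold PbarCor PIof Pcor
  rw [hre1, hre2, c1, c2, c0, tbasis (S*M₁*S), tbasis (S*M₂*S)]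
  simp only [Complex.add_re, Complex.sub_re, Complex.one_re, Complex.re_ofReal_mul]
  ring

set_option maxHeartbeats 1000000 in
theorem characterization
    (q₁ q₂ : ℝ) (ρ₁ ρ₂ : Matrix (Fin 2) (Fin 2) ℂ)
    (hq : q₁ + q₂ = 1)
    (htr₁ : ρ₁.trace = 1) (htr₂ : ρ₂.trace = 1)
    (hρ0 : (rho0 q₁ q₂ ρ₁ ρ₂).PosDef)
    (S : Matrix (Fin 2) (Fin 2) ℂ) (hS : S.PosSemidef) (hSS : S * S = rho0 q₁ q₂ ρ₁ ρ₂)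
    (ν₁ ν₂ : Fin 2 → ℂ)
    (hν₁ : star ν₁ ⬝ᵥ ν₁ = 1) (hν₂ : star ν₂ ⬝ᵥ ν₂ = 1) (hν₁₂ : star ν₁ ⬝ᵥ ν₂ = 0)
    (C₁ C₂ : ℝ) (hC12 : C₁ ≤ C₂) (hCsum : 1 < C₁ + C₂)
    (hbar₁ : S * ((C₁ : ℂ) • vecMulVec ν₁ (star ν₁)
        + ((1 - C₂ : ℝ) : ℂ) • vecMulVec ν₂ (star ν₂)) * S = (q₁ : ℂ) • ρ₁)
    (hbar₂ : S * (((1 - C₁ : ℝ) : ℂ) • vecMulVec ν₁ (star ν₁)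
        + (C₂ : ℂ) • vecMulVec ν₂ (star ν₂)) * S = (q₂ : ℂ) • ρ₂)
    (ρ11 ρ22 : ℝ) (ρ12 : ℂ)
    (h11 : (ρ11 : ℂ) = star ν₁ ⬝ᵥ (rho0 q₁ q₂ ρ₁ ρ₂ *ᵥ ν₁))
    (h22 : (ρ22 : ℂ) = star ν₂ ⬝ᵥ (rho0 q₁ q₂ ρ₁ ρ₂ *ᵥ ν₂))
    (h12 : ρ12 = star ν₁ ⬝ᵥ (rho0 q₁ q₂ ρ₁ ρ₂ *ᵥ ν₂)) :
    PIset C₂ q₁ q₂ ρ₁ ρ₂ = {Q | ∃ t₁ t₂ : ℝ, 0 ≤ t₁ ∧ 0 ≤ t₂ ∧ (C₁ < C₂ → t₁ = 0) ∧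
      0 ≤ ρ11 - t₁ ∧ 0 ≤ ρ22 - t₂ ∧ ‖ρ12‖ ^ 2 ≤ (ρ11 - t₁) * (ρ22 - t₂) ∧
      Q = 1 - t₁ - t₂} := by
  have hres := resolution hν₁ hν₂ hν₁₂
  have hν₂₁ : star ν₂ ⬝ᵥ ν₁ = 0 := by rw [star_dot_comm, hν₁₂, map_zero]
  have hP11 : vecMulVec ν₁ (star ν₁) *ᵥ ν₁ = ν₁ := by rw [vecMulVec_mulVec', hν₁, one_smul]
  have hP12 : vecMulVec ν₁ (star ν₁) *ᵥ ν₂ = 0 := by rw [vecMulVec_mulVec', hν₁₂, zero_smul]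
  have hP21 : vecMulVec ν₂ (star ν₂) *ᵥ ν₁ = 0 := by rw [vecMulVec_mulVec', hν₂₁, zero_smul]
  have hP22 : vecMulVec ν₂ (star ν₂) *ᵥ ν₂ = ν₂ := by rw [vecMulVec_mulVec', hν₂, one_smul]
  have hSh : Sᴴ = S := hS.1
  have hdetS : IsUnit S.det := by
    have hd : (0:ℂ) < (rho0 q₁ q₂ ρ₁ ρ₂).det := hρ0.det_pos
    have hne : S.det * S.det ≠ 0 := by rw [← Matrix.det_mul, hSS]; exact ne_of_gt hd
    exact isUnit_iff_ne_zero.mpr fun h => hne (by rw [h, mul_zero])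
  have hS1 : S * S⁻¹ = 1 := Matrix.mul_nonsing_inv S hdetS
  have hS2 : S⁻¹ * S = 1 := Matrix.nonsing_inv_mul S hdetS
  have hSinvh : (S⁻¹)ᴴ = S⁻¹ := by rw [Matrix.conjTranspose_nonsing_inv, hSh]
  have htr0 : Matrix.trace (rho0 q₁ q₂ ρ₁ ρ₂) = 1 := by
    simp only [rho0, Matrix.trace_add, Matrix.trace_smul, htr₁, htr₂, smul_eq_mul, mul_one]
    rw [← Complex.ofReal_add, hq, Complex.ofReal_one]
  have tbasis : ∀ A : Matrix (Fin 2) (Fin 2) ℂ,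
      Matrix.trace A = star ν₁ ⬝ᵥ A *ᵥ ν₁ + star ν₂ ⬝ᵥ A *ᵥ ν₂ := by
    intro A
    conv_lhs => rw [← Matrix.mul_one A, ← hres]
    rw [Matrix.mul_add, Matrix.trace_add, trace_mul_vecMulVec, trace_mul_vecMulVec]
  have t0 : ∀ M : Matrix (Fin 2) (Fin 2) ℂ,
      Matrix.trace (rho0 q₁ q₂ ρ₁ ρ₂ * M) = Matrix.trace (S*M*S) := by
    intro M
    rw [← hSS]
    calc Matrix.trace (S*S*M) = Matrix.trace (S*(S*M)) := by rw [Matrix.mul_assoc]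
      _ = Matrix.trace ((S*M)*S) := Matrix.trace_mul_comm _ _
  have conj_psd : ∀ M : Matrix (Fin 2) (Fin 2) ℂ, M.PosSemidef → (S*M*S).PosSemidef := by
    intro M hM
    have := hM.mul_mul_conjTranspose_same S
    rwa [hSh] at this
  have hC1' : 0 ≤ C₂ - C₁ := by linarith
  have hC2' : 0 < 2*C₂ - 1 := by linarith
  have hC3' : 0 < C₁ + C₂ - 1 := by linarith
  have hub : ∀ x ∈ {x : ℝ | ∃ M₀ M₁ M₂, IsPOVM M₀ M₁ M₂ ∧
      PbarCor C₂ q₁ q₂ ρ₁ ρ₂ M₀ M₁ M₂ = x}, x ≤ C₂ := by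
    rintro x ⟨M₀, M₁, M₂, ⟨h0, h1, h2, hsum⟩, rfl⟩
    rw [pbar_identity q₁ q₂ ρ₁ ρ₂ htr₁ htr₂ hq S hSS ν₁ ν₂ hres C₁ C₂ hbar₁ hbar₂ M₀ M₁ M₂ hsum]
    have hn1 := conj_psd M₁ h1
    have hn2 := conj_psd M₂ h2
    have r1 : 0 ≤ (star ν₁ ⬝ᵥ (S*M₁*S) *ᵥ ν₁).re := (Complex.nonneg_iff.mp (hn1.dotProduct_mulVec_nonneg ν₁)).1
    have r2 : 0 ≤ (star ν₂ ⬝ᵥ (S*M₁*S) *ᵥ ν₂).re := (Complex.nonneg_iff.mp (hn1.dotProduct_mulVec_nonneg ν₂)).1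
    have r3 : 0 ≤ (star ν₁ ⬝ᵥ (S*M₂*S) *ᵥ ν₁).re := (Complex.nonneg_iff.mp (hn2.dotProduct_mulVec_nonneg ν₁)).1
    nlinarith [mul_nonneg hC1' r1, mul_nonneg hC2'.le r2, mul_nonneg hC3'.le r3]
  have hmem : C₂ ∈ {x : ℝ | ∃ M₀ M₁ M₂, IsPOVM M₀ M₁ M₂ ∧
      PbarCor C₂ q₁ q₂ ρ₁ ρ₂ M₀ M₁ M₂ = x} := by
    refine ⟨1, 0, 0, ⟨Matrix.PosSemidef.one, Matrix.PosSemidef.zero, Matrix.PosSemidef.zero,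
      by simp⟩, ?_⟩
    unfold PbarCor PIof Pcor
    simp [htr0]
  have hopt : PbarOpt C₂ q₁ q₂ ρ₁ ρ₂ = C₂ := by
    unfold PbarOpt
    exact le_antisymm (csSup_le ⟨C₂, hmem⟩ hub) (le_csSup ⟨C₂, hub⟩ hmem)
  ext Q
  constructor
  · rintro ⟨M₀, M₁, M₂, ⟨h0, h1, h2, hsum⟩, hopt', hPI⟩
    rw [pbar_identity q₁ q₂ ρ₁ ρ₂ htr₁ htr₂ hq S hSS ν₁ ν₂ hres C₁ C₂ hbar₁ hbar₂ M₀ M₁ M₂ hsum,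
      hopt] at hopt'
    have hn1 := conj_psd M₁ h1
    have hn2 := conj_psd M₂ h2
    have r1 : 0 ≤ (star ν₁ ⬝ᵥ (S*M₁*S) *ᵥ ν₁).re := (Complex.nonneg_iff.mp (hn1.dotProduct_mulVec_nonneg ν₁)).1
    have r2 : 0 ≤ (star ν₂ ⬝ᵥ (S*M₁*S) *ᵥ ν₂).re := (Complex.nonneg_iff.mp (hn1.dotProduct_mulVec_nonneg ν₂)).1
    have r3 : 0 ≤ (star ν₁ ⬝ᵥ (S*M₂*S) *ᵥ ν₁).re := (Complex.nonneg_iff.mp (hn2.dotProduct_mulVec_nonneg ν₁)).1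
    have r4 : 0 ≤ (star ν₂ ⬝ᵥ (S*M₂*S) *ᵥ ν₂).re := (Complex.nonneg_iff.mp (hn2.dotProduct_mulVec_nonneg ν₂)).1
    have hx2 : (star ν₂ ⬝ᵥ (S*M₁*S) *ᵥ ν₂).re = 0 := by
      refine le_antisymm ?_ r2
      nlinarith [mul_nonneg hC1' r1, mul_nonneg hC3'.le r3, mul_nonneg hC2'.le r2]
    have hx3 : (star ν₁ ⬝ᵥ (S*M₂*S) *ᵥ ν₁).re = 0 := by
      refine le_antisymm ?_ r3
      nlinarith [mul_nonneg hC1' r1, mul_nonneg hC3'.le r3, mul_nonneg hC2'.le r2]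
    have hx1 : (C₂ - C₁) * (star ν₁ ⬝ᵥ (S*M₁*S) *ᵥ ν₁).re = 0 := by
      refine le_antisymm ?_ (mul_nonneg hC1' r1)
      nlinarith [mul_nonneg hC1' r1, mul_nonneg hC3'.le r3, mul_nonneg hC2'.le r2]
    have hb1 : star ν₂ ⬝ᵥ (S*M₁*S) *ᵥ ν₂ = 0 := by
      rw [creal (hn1.dotProduct_mulVec_nonneg ν₂), hx2, Complex.ofReal_zero]
    have hb2 : star ν₁ ⬝ᵥ (S*M₂*S) *ᵥ ν₁ = 0 := by
      rw [creal (hn2.dotProduct_mulVec_nonneg ν₁), hx3, Complex.ofReal_zero]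
    have hvan1 : (S*M₁*S) *ᵥ ν₂ = 0 := (hn1.dotProduct_mulVec_zero_iff ν₂).mp hb1
    have hvan2 : (S*M₂*S) *ᵥ ν₁ = 0 := (hn2.dotProduct_mulVec_zero_iff ν₁).mp hb2
    set t₁ := (star ν₁ ⬝ᵥ (S*M₁*S) *ᵥ ν₁).re with ht₁def
    set t₂ := (star ν₂ ⬝ᵥ (S*M₂*S) *ᵥ ν₂).re with ht₂def
    have ha1c : star ν₁ ⬝ᵥ (S*M₁*S) *ᵥ ν₁ = ((t₁:ℝ):ℂ) := creal (hn1.dotProduct_mulVec_nonneg ν₁)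
    have hb2c : star ν₂ ⬝ᵥ (S*M₂*S) *ᵥ ν₂ = ((t₂:ℝ):ℂ) := creal (hn2.dotProduct_mulVec_nonneg ν₂)
    have hM₀ : M₀ = 1 - M₁ - M₂ := by rw [← hsum]; abel
    have hKeq : S*M₀*S = rho0 q₁ q₂ ρ₁ ρ₂ - S*M₁*S - S*M₂*S := by
      rw [hM₀]
      simp only [Matrix.mul_sub, Matrix.sub_mul, Matrix.mul_one, hSS]
    have hK : (rho0 q₁ q₂ ρ₁ ρ₂ - S*M₁*S - S*M₂*S).PosSemidef := hKeq ▸ conj_psd M₀ h0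
    have dK11 : star ν₁ ⬝ᵥ (rho0 q₁ q₂ ρ₁ ρ₂ - S*M₁*S - S*M₂*S) *ᵥ ν₁ = ((ρ11 - t₁ : ℝ):ℂ) := by
      simp only [Matrix.sub_mulVec, dotProduct_sub]
      rw [← h11, ha1c, hb2]
      push_cast; ring
    have dK22 : star ν₂ ⬝ᵥ (rho0 q₁ q₂ ρ₁ ρ₂ - S*M₁*S - S*M₂*S) *ᵥ ν₂ = ((ρ22 - t₂ : ℝ):ℂ) := by
      simp only [Matrix.sub_mulVec, dotProduct_sub]
      rw [← h22, hb1, hb2c]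
      push_cast; ring
    have dK12 : star ν₁ ⬝ᵥ (rho0 q₁ q₂ ρ₁ ρ₂ - S*M₁*S - S*M₂*S) *ᵥ ν₂ = ρ12 := by
      simp only [Matrix.sub_mulVec, dotProduct_sub]
      have hz1 : star ν₁ ⬝ᵥ (S*M₁*S) *ᵥ ν₂ = 0 := by rw [hvan1, dotProduct_zero]
      have hz2 : star ν₁ ⬝ᵥ (S*M₂*S) *ᵥ ν₂ = 0 := by
        rw [herm_dot hn2.1]
        rw [show star ν₂ ⬝ᵥ (S*M₂*S) *ᵥ ν₁ = 0 by rw [hvan2, dotProduct_zero], map_zero]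
      rw [← h12, hz1, hz2]
      ring
    obtain ⟨hga, hgb, hgab⟩ := form_facts hK dK11 dK22 dK12
    refine ⟨t₁, t₂, r1, r4, ?_, hga, hgb, hgab, ?_⟩
    · intro hlt
      rcases mul_eq_zero.mp hx1 with h | h
      · exact absurd h (by linarith)
      · exact h
    · have htrace : Matrix.trace (rho0 q₁ q₂ ρ₁ ρ₂ * M₀) = ((1 - t₁ - t₂ : ℝ):ℂ) := by
        rw [t0 M₀, hKeq, Matrix.trace_sub, Matrix.trace_sub, htr0,
          tbasis (S*M₁*S), tbasis (S*M₂*S), ha1c, hb1, hb2, hb2c]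
        push_cast; ring
      rw [← hPI]
      unfold PIof
      rw [htrace, Complex.ofReal_re]
  · rintro ⟨t₁, t₂, ht₁, ht₂, htC, hA, hB, hAB, hQ⟩
    have conj_back : ∀ A : Matrix (Fin 2) (Fin 2) ℂ, S * (S⁻¹ * A * S⁻¹) * S = A := by
      intro A
      calc S * (S⁻¹ * A * S⁻¹) * S = (S * S⁻¹) * A * (S⁻¹ * S) := by
            simp only [Matrix.mul_assoc]
        _ = A := by rw [hS1, hS2, Matrix.one_mul, Matrix.mul_one]
    have hK0 : S⁻¹ * rho0 q₁ q₂ ρ₁ ρ₂ * S⁻¹ = 1 := by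
      rw [← hSS]
      calc S⁻¹ * (S * S) * S⁻¹ = (S⁻¹ * S) * (S * S⁻¹) := by simp only [Matrix.mul_assoc]
        _ = 1 := by rw [hS2, hS1, Matrix.mul_one]
    set A₁ : Matrix (Fin 2) (Fin 2) ℂ := (t₁:ℂ) • vecMulVec ν₁ (star ν₁) with hA₁def
    set A₂ : Matrix (Fin 2) (Fin 2) ℂ := (t₂:ℂ) • vecMulVec ν₂ (star ν₂) with hA₂def
    set M₁ : Matrix (Fin 2) (Fin 2) ℂ := S⁻¹ * A₁ * S⁻¹ with hM₁def
    set M₂ : Matrix (Fin 2) (Fin 2) ℂ := S⁻¹ * A₂ * S⁻¹ with hM₂def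
    set M₀ : Matrix (Fin 2) (Fin 2) ℂ := 1 - M₁ - M₂ with hM₀def
    have hA₁psd : A₁.PosSemidef := smul_posSemidef ht₁ (vecMulVec_posSemidef ν₁)
    have hA₂psd : A₂.PosSemidef := smul_posSemidef ht₂ (vecMulVec_posSemidef ν₂)
    have hM₁psd : M₁.PosSemidef := by
      have := hA₁psd.mul_mul_conjTranspose_same S⁻¹
      rwa [hSinvh] at this
    have hM₂psd : M₂.PosSemidef := by
      have := hA₂psd.mul_mul_conjTranspose_same S⁻¹
      rwa [hSinvh] at this
    have hN₁ : S*M₁*S = A₁ := conj_back A₁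
    have hN₂ : S*M₂*S = A₂ := conj_back A₂
    have dA₁11 : star ν₁ ⬝ᵥ A₁ *ᵥ ν₁ = ((t₁:ℝ):ℂ) := by
      rw [hA₁def, smul_mulVec, hP11, dotProduct_smul, hν₁, smul_eq_mul, mul_one]
    have dA₁22 : star ν₂ ⬝ᵥ A₁ *ᵥ ν₂ = 0 := by
      rw [hA₁def, smul_mulVec, hP12, smul_zero, dotProduct_zero]
    have dA₂11 : star ν₁ ⬝ᵥ A₂ *ᵥ ν₁ = 0 := by
      rw [hA₂def, smul_mulVec, hP21, smul_zero, dotProduct_zero]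
    have dA₂22 : star ν₂ ⬝ᵥ A₂ *ᵥ ν₂ = ((t₂:ℝ):ℂ) := by
      rw [hA₂def, smul_mulVec, hP22, dotProduct_smul, hν₂, smul_eq_mul, mul_one]
    have dA₁12 : star ν₁ ⬝ᵥ A₁ *ᵥ ν₂ = 0 := by
      rw [hA₁def, smul_mulVec, hP12, smul_zero, dotProduct_zero]
    have dA₂12 : star ν₁ ⬝ᵥ A₂ *ᵥ ν₂ = 0 := by
      rw [hA₂def, smul_mulVec, hP22, dotProduct_smul, hν₁₂, smul_eq_mul, mul_zero]
    have hKherm : (rho0 q₁ q₂ ρ₁ ρ₂ - A₁ - A₂).IsHermitian :=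
      (hρ0.1.sub (smul_herm t₁ (vecMulVec_posSemidef ν₁).1)).sub
        (smul_herm t₂ (vecMulVec_posSemidef ν₂).1)
    have dK11 : star ν₁ ⬝ᵥ (rho0 q₁ q₂ ρ₁ ρ₂ - A₁ - A₂) *ᵥ ν₁ = ((ρ11 - t₁ : ℝ):ℂ) := by
      simp only [Matrix.sub_mulVec, dotProduct_sub]
      rw [← h11, dA₁11, dA₂11]
      push_cast; ring
    have dK22 : star ν₂ ⬝ᵥ (rho0 q₁ q₂ ρ₁ ρ₂ - A₁ - A₂) *ᵥ ν₂ = ((ρ22 - t₂ : ℝ):ℂ) := by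
      simp only [Matrix.sub_mulVec, dotProduct_sub]
      rw [← h22, dA₁22, dA₂22]
      push_cast; ring
    have dK12 : star ν₁ ⬝ᵥ (rho0 q₁ q₂ ρ₁ ρ₂ - A₁ - A₂) *ᵥ ν₂ = ρ12 := by
      simp only [Matrix.sub_mulVec, dotProduct_sub]
      rw [← h12, dA₁12, dA₂12]
      ring
    have hKpsd : (rho0 q₁ q₂ ρ₁ ρ₂ - A₁ - A₂).PosSemidef :=
      posSemidef_of_form hres hKherm dK11 dK22 dK12 hA hB hAB
    have hM₀eq : M₀ = S⁻¹ * (rho0 q₁ q₂ ρ₁ ρ₂ - A₁ - A₂) * S⁻¹ := by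
      rw [hM₀def]
      simp only [Matrix.mul_sub, Matrix.sub_mul, hK0, hM₁def, hM₂def]
    have hM₀psd : M₀.PosSemidef := by
      rw [hM₀eq]
      have := hKpsd.mul_mul_conjTranspose_same S⁻¹
      rwa [hSinvh] at this
    have hsum : M₀ + M₁ + M₂ = 1 := by rw [hM₀def]; abel
    have trP1 : (vecMulVec ν₁ (star ν₁)).trace = 1 := by
      rw [← Matrix.mul_one (vecMulVec ν₁ (star ν₁)), trace_vecMulVec_mul, Matrix.one_mulVec, hν₁]
    have trP2 : (vecMulVec ν₂ (star ν₂)).trace = 1 := by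
      rw [← Matrix.mul_one (vecMulVec ν₂ (star ν₂)), trace_vecMulVec_mul, Matrix.one_mulVec, hν₂]
    have hPIval : PIof q₁ q₂ ρ₁ ρ₂ M₀ = 1 - t₁ - t₂ := by
      unfold PIof
      have : Matrix.trace (rho0 q₁ q₂ ρ₁ ρ₂ * M₀) = ((1 - t₁ - t₂ : ℝ):ℂ) := by
        rw [t0 M₀, hM₀eq, conj_back, Matrix.trace_sub, Matrix.trace_sub, htr0, hA₁def, hA₂def,
          Matrix.trace_smul, Matrix.trace_smul, trP1, trP2, smul_eq_mul, smul_eq_mul]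
        push_cast; ring
      rw [this, Complex.ofReal_re]
    refine ⟨M₀, M₁, M₂, ⟨hM₀psd, hM₁psd, hM₂psd, hsum⟩, ?_, by rw [hPIval, hQ]⟩
    rw [pbar_identity q₁ q₂ ρ₁ ρ₂ htr₁ htr₂ hq S hSS ν₁ ν₂ hres C₁ C₂ hbar₁ hbar₂ M₀ M₁ M₂ hsum,
      hopt, hN₁, hN₂, dA₁11, dA₁22, dA₂11]
    simp only [Complex.ofReal_re, Complex.zero_re]
    rcases lt_or_eq_of_le hC12 with hlt | heq
    · rw [htC hlt]; ring
    · rw [heq]; ring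

set_option maxHeartbeats 1000000

/-- Description of the set `P_I(C₂)` in the four cases. -/
theorem stmt6
    (q₁ q₂ : ℝ) (ρ₁ ρ₂ : Matrix (Fin 2) (Fin 2) ℂ)
    (hq₁ : 0 < q₁) (hq₂ : 0 < q₂) (hq : q₁ + q₂ = 1)
    (hρ₁ : ρ₁.PosSemidef) (htr₁ : ρ₁.trace = 1)
    (hρ₂ : ρ₂.PosSemidef) (htr₂ : ρ₂.trace = 1)
    (hρ0 : (rho0 q₁ q₂ ρ₁ ρ₂).PosDef)
    (S : Matrix (Fin 2) (Fin 2) ℂ) (hS : S.PosSemidef) (hSS : S * S = rho0 q₁ q₂ ρ₁ ρ₂)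
    (ν₁ ν₂ : Fin 2 → ℂ)
    (hν₁ : star ν₁ ⬝ᵥ ν₁ = 1) (hν₂ : star ν₂ ⬝ᵥ ν₂ = 1) (hν₁₂ : star ν₁ ⬝ᵥ ν₂ = 0)
    (C₁ C₂ : ℝ) (hC12 : C₁ ≤ C₂) (hCsum : 1 < C₁ + C₂)
    (hbar₁ : S * ((C₁ : ℂ) • vecMulVec ν₁ (star ν₁)
        + ((1 - C₂ : ℝ) : ℂ) • vecMulVec ν₂ (star ν₂)) * S = (q₁ : ℂ) • ρ₁)
    (hbar₂ : S * (((1 - C₁ : ℝ) : ℂ) • vecMulVec ν₁ (star ν₁)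
        + (C₂ : ℂ) • vecMulVec ν₂ (star ν₂)) * S = (q₂ : ℂ) • ρ₂)
    (ρ11 ρ22 : ℝ) (ρ12 : ℂ)
    (h11 : (ρ11 : ℂ) = star ν₁ ⬝ᵥ (rho0 q₁ q₂ ρ₁ ρ₂ *ᵥ ν₁))
    (h22 : (ρ22 : ℂ) = star ν₂ ⬝ᵥ (rho0 q₁ q₂ ρ₁ ρ₂ *ᵥ ν₂))
    (h12 : ρ12 = star ν₁ ⬝ᵥ (rho0 q₁ q₂ ρ₁ ρ₂ *ᵥ ν₂))
    :
    (C₁ < C₂ →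
        PIset C₂ q₁ q₂ ρ₁ ρ₂ = Set.Icc (ρ11 + ‖ρ12‖ ^ 2 / ρ11) 1) ∧
      (C₁ = C₂ →
        ((ρ11 < ‖ρ12‖ → ‖ρ12‖ ≤ ρ22 →
            PIset C₂ q₁ q₂ ρ₁ ρ₂ = Set.Icc (ρ11 + ‖ρ12‖ ^ 2 / ρ11) 1) ∧
          (ρ22 < ‖ρ12‖ → ‖ρ12‖ ≤ ρ11 →
            PIset C₂ q₁ q₂ ρ₁ ρ₂ = Set.Icc (ρ22 + ‖ρ12‖ ^ 2 / ρ22) 1) ∧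
          (‖ρ12‖ ≤ ρ11 → ‖ρ12‖ ≤ ρ22 →
            PIset C₂ q₁ q₂ ρ₁ ρ₂ = Set.Icc (2 * ‖ρ12‖) 1))) := by
  have hres := resolution hν₁ hν₂ hν₁₂
  have hν₁ne : ν₁ ≠ 0 := by
    intro h; rw [h] at hν₁; simp at hν₁
  have hν₂ne : ν₂ ≠ 0 := by
    intro h; rw [h] at hν₂; simp at hν₂
  have hρ11pos : 0 < ρ11 := by
    have h := hρ0.dotProduct_mulVec_pos hν₁ne
    rw [← h11] at h
    exact Complex.zero_lt_real.mp h
  have hρ22pos : 0 < ρ22 := by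
    have h := hρ0.dotProduct_mulVec_pos hν₂ne
    rw [← h22] at h
    exact Complex.zero_lt_real.mp h
  have htr0 : Matrix.trace (rho0 q₁ q₂ ρ₁ ρ₂) = 1 := by
    simp only [rho0, Matrix.trace_add, Matrix.trace_smul, htr₁, htr₂, smul_eq_mul, mul_one]
    rw [← Complex.ofReal_add, hq, Complex.ofReal_one]
  have tbasis : ∀ A : Matrix (Fin 2) (Fin 2) ℂ,
      Matrix.trace A = star ν₁ ⬝ᵥ A *ᵥ ν₁ + star ν₂ ⬝ᵥ A *ᵥ ν₂ := by
    intro A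
    conv_lhs => rw [← Matrix.mul_one A, ← hres]
    rw [Matrix.mul_add, Matrix.trace_add, trace_mul_vecMulVec, trace_mul_vecMulVec]
  have hsum1 : ρ11 + ρ22 = 1 := by
    have hc : (ρ11:ℂ) + (ρ22:ℂ) = 1 := by
      rw [h11, h22, ← tbasis (rho0 q₁ q₂ ρ₁ ρ₂), htr0]
    exact_mod_cast hc
  have habs0 : ‖ρ12‖ ^ 2 ≤ ρ11 * ρ22 :=
    (form_facts hρ0.posSemidef h11.symm h22.symm h12.symm).2.2
  have hchar := characterization q₁ q₂ ρ₁ ρ₂ hq htr₁ htr₂ hρ0 S hS hSS ν₁ ν₂ hν₁ hν₂ hν₁₂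
    C₁ C₂ hC12 hCsum hbar₁ hbar₂ ρ11 ρ22 ρ12 h11 h22 h12
  set r := ‖ρ12‖ with hrdef
  have hr0 : 0 ≤ r := norm_nonneg _
  have mk1 : ∀ Q : ℝ, ρ11 + r^2/ρ11 ≤ Q → Q ≤ 1 →
      ∃ t₁ t₂ : ℝ, 0 ≤ t₁ ∧ 0 ≤ t₂ ∧ (C₁ < C₂ → t₁ = 0) ∧ 0 ≤ ρ11 - t₁ ∧ 0 ≤ ρ22 - t₂ ∧
        r ^ 2 ≤ (ρ11 - t₁) * (ρ22 - t₂) ∧ Q = 1 - t₁ - t₂ := by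
    intro Q hlow hhigh
    have hd : 0 ≤ r^2/ρ11 := div_nonneg (sq_nonneg r) hρ11pos.le
    have h3 : r^2 ≤ (Q - ρ11)*ρ11 := (div_le_iff₀ hρ11pos).mp (by linarith)
    refine ⟨0, 1 - Q, le_refl 0, by linarith, fun _ => rfl, by linarith, by linarith, ?_, by ring⟩
    have e : (ρ11 - 0)*(ρ22 - (1 - Q)) = (Q - ρ11)*ρ11 := by linear_combination ρ11 * hsum1
    rw [e]; exact h3
  have mk2 : C₁ = C₂ → ∀ Q : ℝ, ρ22 + r^2/ρ22 ≤ Q → Q ≤ 1 →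
      ∃ t₁ t₂ : ℝ, 0 ≤ t₁ ∧ 0 ≤ t₂ ∧ (C₁ < C₂ → t₁ = 0) ∧ 0 ≤ ρ11 - t₁ ∧ 0 ≤ ρ22 - t₂ ∧
        r ^ 2 ≤ (ρ11 - t₁) * (ρ22 - t₂) ∧ Q = 1 - t₁ - t₂ := by
    intro heq Q hlow hhigh
    have hd : 0 ≤ r^2/ρ22 := div_nonneg (sq_nonneg r) hρ22pos.le
    have h3 : r^2 ≤ (Q - ρ22)*ρ22 := (div_le_iff₀ hρ22pos).mp (by linarith)
    refine ⟨1 - Q, 0, by linarith, le_refl 0, fun hlt => absurd heq (ne_of_lt hlt),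
      by linarith, by linarith, ?_, by ring⟩
    have e : (ρ11 - (1 - Q))*(ρ22 - 0) = (Q - ρ22)*ρ22 := by linear_combination ρ22 * hsum1
    rw [e]; exact h3
  refine ⟨fun hlt => ?_, fun heq => ⟨fun hcr1 hcr2 => ?_, fun hcr1 hcr2 => ?_,
    fun hcr1 hcr2 => ?_⟩⟩
  · -- Case A : C₁ < C₂
    rw [hchar]
    ext Q
    simp only [Set.mem_setOf_eq, Set.mem_Icc]
    constructor
    · rintro ⟨t₁, t₂, ht₁, ht₂, htC, hA, hB, hAB, rfl⟩
      have h0 : t₁ = 0 := htC hlt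
      subst h0
      have h1 : r^2 ≤ ρ11*(ρ22 - t₂) := by nlinarith [hAB]
      have h2 : r^2/ρ11 ≤ ρ22 - t₂ := (div_le_iff₀ hρ11pos).mpr (by linarith)
      exact ⟨by linarith, by linarith⟩
    · rintro ⟨hlow, hhigh⟩; exact mk1 Q hlow hhigh
  · -- Case B1 : C₁ = C₂, ρ11 < r ≤ ρ22
    rw [hchar]
    ext Q
    simp only [Set.mem_setOf_eq, Set.mem_Icc]
    constructor
    · rintro ⟨t₁, t₂, ht₁, ht₂, htC, hA, hB, hAB, rfl⟩
      have hrpos : 0 < r := lt_trans hρ11pos hcr1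
      have hapos : 0 < ρ11 - t₁ := by
        rcases hA.lt_or_eq with h | h
        · exact h
        · exfalso; nlinarith [hAB, pow_pos hrpos 2]
      have hfac : 0 ≤ (ρ11 - (ρ11 - t₁)) * (r^2 - ρ11*(ρ11 - t₁)) :=
        mul_nonneg (by linarith) (by nlinarith)
      have key : ρ11^2 + r^2 ≤ ρ11*((ρ11 - t₁) + (ρ22 - t₂)) := by
        nlinarith [hfac, mul_le_mul_of_nonneg_left hAB hρ11pos.le, hapos]
      have h2' : r^2/ρ11 ≤ (1 - t₁ - t₂) - ρ11 := (div_le_iff₀ hρ11pos).mpr (by nlinarith [key])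
      exact ⟨by linarith, by linarith⟩
    · rintro ⟨hlow, hhigh⟩; exact mk1 Q hlow hhigh
  · -- Case B2 : C₁ = C₂, ρ22 < r ≤ ρ11
    rw [hchar]
    ext Q
    simp only [Set.mem_setOf_eq, Set.mem_Icc]
    constructor
    · rintro ⟨t₁, t₂, ht₁, ht₂, htC, hA, hB, hAB, rfl⟩
      have hrpos : 0 < r := lt_trans hρ22pos hcr1
      have hbpos : 0 < ρ22 - t₂ := by
        rcases hB.lt_or_eq with h | h
        · exact h
        · exfalso; nlinarith [hAB, pow_pos hrpos 2]
      have hfac : 0 ≤ (ρ22 - (ρ22 - t₂)) * (r^2 - ρ22*(ρ22 - t₂)) :=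
        mul_nonneg (by linarith) (by nlinarith)
      have key : ρ22^2 + r^2 ≤ ρ22*((ρ11 - t₁) + (ρ22 - t₂)) := by
        nlinarith [hfac, mul_le_mul_of_nonneg_left hAB hρ22pos.le, hbpos]
      have h2' : r^2/ρ22 ≤ (1 - t₁ - t₂) - ρ22 := (div_le_iff₀ hρ22pos).mpr (by nlinarith [key])
      exact ⟨by linarith, by linarith⟩
    · rintro ⟨hlow, hhigh⟩; exact mk2 heq Q hlow hhigh
  · -- Case B3 : C₁ = C₂, r ≤ ρ11, r ≤ ρ22
    rw [hchar]
    ext Q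
    simp only [Set.mem_setOf_eq, Set.mem_Icc]
    constructor
    · rintro ⟨t₁, t₂, ht₁, ht₂, htC, hA, hB, hAB, rfl⟩
      constructor
      · nlinarith [sq_nonneg ((ρ11 - t₁) - (ρ22 - t₂)), hAB, hA, hB, hr0]
      · linarith
    · rintro ⟨hlow, hhigh⟩
      by_cases hdeg : 1 - 2*r = 0
      · have hQ1 : Q = 1 := le_antisymm hhigh (by linarith)
        exact ⟨0, 0, le_refl 0, le_refl 0, fun hlt => rfl, by linarith, by linarith,
          by simpa using habs0, by linarith⟩
      · have hden : 0 < 1 - 2*r := lt_of_le_of_ne (by linarith) (Ne.symm hdeg)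
        set lam := (1 - Q)/(1 - 2*r) with hlam
        have hlam0 : 0 ≤ lam := div_nonneg (by linarith) hden.le
        have hlam1 : lam ≤ 1 := (div_le_one hden).mpr (by linarith)
        refine ⟨lam*(ρ11 - r), lam*(ρ22 - r), mul_nonneg hlam0 (by linarith),
          mul_nonneg hlam0 (by linarith), fun hlt => absurd heq (ne_of_lt hlt), ?_, ?_, ?_, ?_⟩
        · nlinarith [mul_nonneg (sub_nonneg.2 hlam1) hρ11pos.le, mul_nonneg hlam0 hr0]
        · nlinarith [mul_nonneg (sub_nonneg.2 hlam1) hρ22pos.le, mul_nonneg hlam0 hr0]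
        · have key : (ρ11 - lam*(ρ11 - r))*(ρ22 - lam*(ρ22 - r)) - r^2
              = (1-lam)^2*(ρ11*ρ22 - r^2) + lam*(1-lam)*r*(ρ11+ρ22-2*r) := by ring
          have k1 : 0 ≤ (1-lam)^2*(ρ11*ρ22 - r^2) :=
            mul_nonneg (sq_nonneg _) (by linarith [habs0])
          have k2 : 0 ≤ lam*(1-lam)*r*(ρ11+ρ22-2*r) :=
            mul_nonneg (mul_nonneg (mul_nonneg hlam0 (by linarith)) hr0) (by linarith)
          linarith [key, k1, k2]
        · have hfs : lam*(1-2*r) = 1 - Q := by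
            rw [hlam]; field_simp
          have e : lam*(ρ11 - r) + lam*(ρ22 - r) = lam*(1-2*r) := by
            have e2 : ρ11 + ρ22 - 2*r = 1 - 2*r := by linarith
            calc lam*(ρ11-r) + lam*(ρ22-r) = lam*(ρ11+ρ22-2*r) := by ring
              _ = lam*(1-2*r) := by rw [e2]
          linarith [hfs, e]

end FRIR
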